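/- If A ∈ ℂ^{m×m} and B ∈ ℂ^{n×n} have no common eigenvalue, then for every C ∈ ℂ^{m×n} the Sylvester equation XB - AX = C has a unique solution X ∈ ℂ^{m×n}. -/

import Mathlib

open Polynomial Matrix

/-- Eigenvalues (spectrum) are exactly roots of the characteristic polynomial. -/
lemma spectrum_iff_charpoly_root {k : ℕ} (M : Matrix (Fin k) (Fin k) ℂ) (μ : ℂ) :
    μ ∈ spectrum ℂ M ↔ M.charpoly.IsRoot μ := by
  rw [spectrum.mem_iff, Matrix.isUnit_iff_isUnit_det, isUnit_iff_ne_zero, not_ne_iff,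
    Polynomial.IsRoot, Matrix.charpoly, _root_.eval_det, matPolyEquiv_charmatrix]
  simp only [eval_sub, eval_X, eval_C]
  have hs : (Matrix.scalar (Fin k)) μ = algebraMap ℂ (Matrix (Fin k) (Fin k) ℂ) μ := by
    simp [Matrix.scalar, Matrix.algebraMap_eq_diagonal]
  rw [hs]

lemma comm_pow {m n : ℕ} (A : Matrix (Fin m) (Fin m) ℂ) (B : Matrix (Fin n) (Fin n) ℂ)
    (X : Matrix (Fin m) (Fin n) ℂ) (hX : X * B = A * X) (k : ℕ) :
    X * B ^ k = A ^ k * X := by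
  induction k with
  | zero => simp
  | succ k ih =>
    rw [pow_succ, pow_succ, ← Matrix.mul_assoc, ih, Matrix.mul_assoc, hX, ← Matrix.mul_assoc]

lemma comm_aeval {m n : ℕ} (A : Matrix (Fin m) (Fin m) ℂ) (B : Matrix (Fin n) (Fin n) ℂ)
    (X : Matrix (Fin m) (Fin n) ℂ) (hX : X * B = A * X) (p : ℂ[X]) :
    X * (Polynomial.aeval B p) = (Polynomial.aeval A p) * X := by
  induction p using Polynomial.induction_on' with
  | add p q hp hq => rw [map_add, map_add, Matrix.mul_add, Matrix.add_mul, hp, hq]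
  | monomial k c =>
    rw [aeval_monomial, aeval_monomial]
    simp only [Algebra.algebraMap_eq_smul_one, Matrix.smul_mul, Matrix.mul_smul, Matrix.one_mul]
    rw [comm_pow A B X hX k]

lemma aeval_charpoly_isUnit {m n : ℕ}
    (A : Matrix (Fin m) (Fin m) ℂ) (B : Matrix (Fin n) (Fin n) ℂ)
    (h : ∀ μ : ℂ, ¬ (μ ∈ spectrum ℂ A ∧ μ ∈ spectrum ℂ B)) :
    IsUnit (Polynomial.aeval B A.charpoly) := by
  rcases Nat.eq_zero_or_pos m with hm | hm
  · subst hm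
    have h1 : A.charpoly = 1 := by
      rw [Matrix.charpoly, Matrix.det_isEmpty]
    rw [h1, _root_.map_one]
    exact isUnit_one
  · by_contra hnu
    have h0 : (0 : ℂ) ∈ spectrum ℂ (Polynomial.aeval B A.charpoly) :=
      (spectrum.zero_mem_iff ℂ).mpr hnu
    rw [spectrum.map_polynomial_aeval_of_degree_pos B A.charpoly
      (by rw [Matrix.charpoly_degree_eq_dim]; simpa using hm)] at h0
    obtain ⟨μ, hμB, hμ⟩ := h0
    exact h μ ⟨(spectrum_iff_charpoly_root A μ).mpr hμ, hμB⟩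

theorem sylvester_unique_solution (m n : ℕ)
    (A : Matrix (Fin m) (Fin m) ℂ) (B : Matrix (Fin n) (Fin n) ℂ)
    (h : ∀ μ : ℂ, ¬ (μ ∈ spectrum ℂ A ∧ μ ∈ spectrum ℂ B)) :
    ∀ C : Matrix (Fin m) (Fin n) ℂ,
      ∃! X : Matrix (Fin m) (Fin n) ℂ, X * B - A * X = C := by
  -- the Sylvester linear map
  set T : Matrix (Fin m) (Fin n) ℂ →ₗ[ℂ] Matrix (Fin m) (Fin n) ℂ :=
    { toFun := fun X => X * B - A * X
      map_add' := fun X Y => by rw [Matrix.add_mul, Matrix.mul_add]; abel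
      map_smul' := fun c X => by
        simp [Matrix.smul_mul, Matrix.mul_smul, smul_sub] } with hT
  have hinj : Function.Injective T := by
    rw [← LinearMap.ker_eq_bot, LinearMap.ker_eq_bot']
    intro X hX0
    have hX : X * B = A * X := by
      have h' : X * B - A * X = 0 := hX0
      rw [sub_eq_zero] at h'
      exact h'
    have key : X * (Polynomial.aeval B A.charpoly) = 0 := by
      rw [comm_aeval A B X hX, Matrix.aeval_self_charpoly, Matrix.zero_mul]
    obtain ⟨u, hu⟩ := aeval_charpoly_isUnit A B h
    have h2 : X * ((Polynomial.aeval B A.charpoly) * (↑u⁻¹ : Matrix (Fin n) (Fin n) ℂ)) = 0 := by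
      rw [← Matrix.mul_assoc, key, Matrix.zero_mul]
    rwa [← hu, Units.mul_inv, Matrix.mul_one] at h2
  have hsurj : Function.Surjective T :=
    (LinearMap.injective_iff_surjective).mp hinj
  intro C
  obtain ⟨X, hX⟩ := hsurj C
  refine ⟨X, hX, ?_⟩
  intro Y hY
  apply hinj
  show T Y = T X
  rw [show T Y = Y * B - A * Y from rfl, hY]
  exact hX.symm
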